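/- For every b ≥ 2 and every nonnegative integer n, there exists m ≤ n whose base-b expansion contains only digits 0 and 1, such that s_b(m) ≥ s_b(n). -/

import Mathlib

def IsSb (b : ℕ) (s : ℕ → ℕ) : Prop :=
  s 0 = 0 ∧ s 1 = 1 ∧
  ∀ n : ℕ, s (b * n) = s n ∧ s (b * n + 1) = s n + s (n + 1) ∧
    ∀ i : ℕ, 2 ≤ i → i ≤ b - 1 → s (b * n + i) = s (n + 1)

theorem stmt5_key (b : ℕ) (hb : 2 ≤ b) (s : ℕ → ℕ) (hs : IsSb b s) (n : ℕ) :
    ∃ m : ℕ, m ≤ n ∧ (∀ d ∈ Nat.digits b m, d ≤ 1) ∧ s n ≤ s m ∧ s (n + 1) ≤ s (m + 1) := by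
  obtain ⟨h0, h1, hrec⟩ := hs
  have key2 : ∀ k, s (b * k + 2) = s (k + 1) := by
    intro k
    rcases eq_or_lt_of_le hb with hb2 | hb3
    · have h : b * k + 2 = b * (k + 1) := by rw [← hb2]; ring
      rw [h, (hrec (k + 1)).1]
    · exact (hrec k).2.2 2 le_rfl (by omega)
  induction n using Nat.strong_induction_on with
  | _ n ih =>
    rcases Nat.eq_zero_or_pos n with hn | hn
    · subst hn
      exact ⟨0, le_rfl, by simp, le_rfl, le_rfl⟩
    · have hqlt : n / b < n := Nat.div_lt_self hn (by omega)
      obtain ⟨m, hm, hdig, hs1, hs2⟩ := ih (n / b) hqlt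
      have hnd : b * (n / b) + n % b = n := Nat.div_add_mod n b
      have hrlt : n % b < b := Nat.mod_lt _ (by omega)
      set q := n / b with hqdef
      set r := n % b with hrdef
      rcases Nat.eq_zero_or_pos r with hr0 | hr1
      · -- n = b * q
        have hn' : n = b * q := by omega
        refine ⟨b * m, by rw [hn']; exact Nat.mul_le_mul_left b hm, ?_, ?_, ?_⟩
        · rcases Nat.eq_zero_or_pos m with hm0 | hm0
          · subst hm0; simp
          · have : Nat.digits b (b * m) = 0 :: Nat.digits b m := by
              rw [Nat.digits_def' (by omega : 1 < b) (by positivity)]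
              simp [Nat.mul_div_cancel_left _ (by omega : 0 < b)]
            rw [this]
            intro d hd
            rcases List.mem_cons.mp hd with h | h
            · omega
            · exact hdig d h
        · rw [hn', (hrec q).1, (hrec m).1]; exact hs1
        · rw [hn', (hrec q).2.1, (hrec m).2.1]; exact Nat.add_le_add hs1 hs2
      · -- n = b * q + r, 1 ≤ r < b
        have hle : b * m + 1 ≤ n := by
          have := Nat.mul_le_mul_left b hm
          omega
        refine ⟨b * m + 1, hle, ?_, ?_, ?_⟩
        · have : Nat.digits b (b * m + 1) = 1 :: Nat.digits b m := by
            rw [Nat.digits_def' (by omega : 1 < b) (by omega)]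
            have h1 : (b * m + 1) % b = 1 := by
              rw [Nat.mul_add_mod]; exact Nat.mod_eq_of_lt (by omega)
            have h2 : (b * m + 1) / b = m := by
              rw [Nat.mul_add_div (by omega : 0 < b)]
              simp [Nat.div_eq_of_lt (by omega : 1 < b)]
            rw [h1, h2]
          rw [this]
          intro d hd
          rcases List.mem_cons.mp hd with h | h
          · omega
          · exact hdig d h
        · -- s n ≤ s (b*m+1) = s m + s (m+1)
          rw [(hrec m).2.1]
          rcases eq_or_lt_of_le (show 1 ≤ r from hr1) with hr1' | hr2
          · have hn' : n = b * q + 1 := by omega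
            rw [hn', (hrec q).2.1]
            exact Nat.add_le_add hs1 hs2
          · have hn' : n = b * q + r := by omega
            rw [hn', (hrec q).2.2 r (by omega) (by omega)]
            calc s (q + 1) ≤ s (m + 1) := hs2
              _ ≤ s m + s (m + 1) := Nat.le_add_left _ _
        · -- s (n+1) ≤ s (b*m+2) = s (m+1)
          have h2 : s (b * m + 1 + 1) = s (m + 1) := by
            have : b * m + 1 + 1 = b * m + 2 := by omega
            rw [this, key2]
          rw [h2]
          rcases eq_or_lt_of_le (by omega : r + 1 ≤ b) with hrb | hrb
          · have hb' : b * (q + 1) = b * q + b := by ring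
            have hn' : n + 1 = b * (q + 1) := by omega
            rw [hn', (hrec (q + 1)).1]
            exact hs2
          · have hn' : n + 1 = b * q + (r + 1) := by omega
            rw [hn', (hrec q).2.2 (r + 1) (by omega) (by omega)]
            exact hs2

/-- For every n there is m ≤ n with only digits 0 and 1 in base b and s_b(m) ≥ s_b(n). -/
theorem stmt5 (b : ℕ) (hb : 2 ≤ b) (s : ℕ → ℕ) (hs : IsSb b s) (n : ℕ) :
    ∃ m : ℕ, m ≤ n ∧ (∀ d ∈ Nat.digits b m, d ≤ 1) ∧ s n ≤ s m := by
  obtain ⟨m, h1, h2, h3, _⟩ := stmt5_key b hb s hs n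
  exact ⟨m, h1, h2, h3⟩
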